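/- If m, n ≥ 2 and m + n is odd, then 4 ≤ aw(P_m □ P_n, 3); equivalently, there exists an exact 3-coloring of the grid P_m □ P_n containing no rainbow 3-AP. -/

import Mathlib

open SimpleGraph

/-- `v` lists the vertices of a `k`-term arithmetic progression in `G`:
consecutive vertices are at a common distance `d`. -/
def IsAPIn {V : Type*} (G : SimpleGraph V) (k : ℕ) (v : Fin k → V) : Prop :=
  ∃ d : ℕ, ∀ (i : ℕ) (h : i + 1 < k),
    G.dist (v ⟨i, by omega⟩) (v ⟨i + 1, h⟩) = d

/-- The coloring `c` admits a rainbow `k`-AP in `G`: a `k`-AP whose vertices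
are pairwise distinct and receive pairwise distinct colors. -/
def HasRainbowAP {V α : Type*} (G : SimpleGraph V) (k : ℕ) (c : V → α) : Prop :=
  ∃ v : Fin k → V, IsAPIn G k v ∧ Function.Injective (c ∘ v)

/-- The anti-van der Waerden number `aw(G,k)`: the least positive `r` such that
every exact `r`-coloring of `G` contains a rainbow `k`-AP.  (For `r = |V(G)|+1`
there is no surjection onto `r` colors, so the defining set is nonempty and
`aw(G,k) ≤ |V(G)|+1` automatically, matching the convention.) -/
noncomputable def aw {V : Type*} [Fintype V] (G : SimpleGraph V) (k : ℕ) : ℕ :=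
  sInf {r : ℕ | 0 < r ∧ ∀ c : V → Fin r, Function.Surjective c → HasRainbowAP G k c}


private lemma ndist_def (a b : ℕ) : Nat.dist a b = a - b + (b - a) := rfl

private lemma grid_walk_lb {m n : ℕ} :
    ∀ {x y : Fin m × Fin n} (w : (pathGraph m □ pathGraph n).Walk x y),
      Nat.dist x.1.val y.1.val + Nat.dist x.2.val y.2.val ≤ w.length := by
  intro x y w
  induction w with
  | nil => simp [Nat.dist_self]
  | @cons a b c h w ih =>
    rw [Walk.length_cons]
    rw [boxProd_adj] at h
    rcases h with ⟨h1, h2⟩ | ⟨h1, h2⟩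
    · rw [pathGraph_adj] at h1
      have h2' : a.2.val = b.2.val := by rw [h2]
      simp only [ndist_def] at *
      omega
    · rw [pathGraph_adj] at h1
      have h2' : a.1.val = b.1.val := by rw [h2]
      simp only [ndist_def] at *
      omega

private lemma path_walk_ub {m : ℕ} :
    ∀ (k : ℕ) (a b : Fin m), Nat.dist a.val b.val = k →
      ∃ w : (pathGraph m).Walk a b, w.length = k := by
  intro k
  induction k with
  | zero =>
    intro a b h
    have : a = b := Fin.ext (by simp [ndist_def] at h; omega)
    subst this
    exact ⟨Walk.nil, rfl⟩
  | succ k ih =>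
    intro a b h
    rcases lt_or_gt_of_ne (show a.val ≠ b.val by
      intro he; rw [he, Nat.dist_self] at h; omega) with hlt | hgt
    · set a' : Fin m := ⟨a.val + 1, by omega⟩ with ha'
      have hadj : (pathGraph m).Adj a a' := pathGraph_adj.mpr (Or.inl rfl)
      obtain ⟨w, hw⟩ := ih a' b (by have : a'.val = a.val + 1 := rfl; simp only [ndist_def] at *; omega)
      exact ⟨Walk.cons hadj w, by simp [hw]⟩
    · set a' : Fin m := ⟨a.val - 1, by omega⟩ with ha'
      have hadj : (pathGraph m).Adj a a' := pathGraph_adj.mpr (Or.inr (by simp [ha']; omega))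
      obtain ⟨w, hw⟩ := ih a' b (by have : a'.val = a.val - 1 := rfl; simp only [ndist_def] at *; omega)
      exact ⟨Walk.cons hadj w, by simp [hw]⟩

private lemma grid_dist {m n : ℕ} (x y : Fin m × Fin n) :
    (pathGraph m □ pathGraph n).dist x y
      = Nat.dist x.1.val y.1.val + Nat.dist x.2.val y.2.val := by
  obtain ⟨w1, hw1⟩ := path_walk_ub (Nat.dist x.1.val y.1.val) x.1 y.1 rfl
  obtain ⟨w2, hw2⟩ := path_walk_ub (Nat.dist x.2.val y.2.val) x.2 y.2 rfl
  have hx : x = (x.1, x.2) := rfl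
  have hy : y = (y.1, y.2) := rfl
  let W : (pathGraph m □ pathGraph n).Walk x y := by
    rw [hx, hy]
    exact (w1.boxProdLeft (pathGraph n) x.2).append (w2.boxProdRight (pathGraph m) y.1)
  have hWlen : W.length = Nat.dist x.1.val y.1.val + Nat.dist x.2.val y.2.val := by
    simp [W, Walk.length_append, Walk.boxProdLeft, Walk.boxProdRight, hw1, hw2]
    erw [Walk.length_append, Walk.length_map, Walk.length_map, hw1, hw2]
  apply le_antisymm
  · have := SimpleGraph.dist_le W
    omega
  · obtain ⟨w, hw⟩ := SimpleGraph.Reachable.exists_walk_length_eq_dist ⟨W⟩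
    have := grid_walk_lb w
    omega

section Main
variable {m n : ℕ}

private def gc (hm : 2 ≤ m) (hn : 2 ≤ n) (x : Fin m × Fin n) : Fin 3 :=
  if x = (⟨0, by omega⟩, ⟨0, by omega⟩) then 1
  else if x = (⟨m-1, by omega⟩, ⟨n-1, by omega⟩) then 2 else 0

set_option maxHeartbeats 2000000 in
set_option maxHeartbeats 1000000 in
private lemma gc_no_rainbow (hm : 2 ≤ m) (hn : 2 ≤ n) (hodd : Odd (m + n)) :
    ¬ HasRainbowAP (pathGraph m □ pathGraph n) 3 (gc hm hn) := by
  obtain ⟨t, ht⟩ := hodd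
  rintro ⟨v, ⟨d, hAP⟩, hinj⟩
  set O : Fin m × Fin n := (⟨0, by omega⟩, ⟨0, by omega⟩) with hO
  set C : Fin m × Fin n := (⟨m - 1, by omega⟩, ⟨n - 1, by omega⟩) with hC
  have hv : Function.Injective v := Function.Injective.of_comp hinj
  have hsurj : Function.Surjective (gc hm hn ∘ v) :=
    Function.Injective.surjective_of_finite (Equiv.refl _) hinj
  obtain ⟨i, hi⟩ := hsurj 1
  obtain ⟨j, hj⟩ := hsurj 2
  have hvi : v i = O := by
    have := hi
    simp only [Function.comp_apply, gc, ← hO, ← hC] at this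
    split_ifs at this with h1 h2
    · exact h1
    · exact absurd this (by decide)
    · exact absurd this (by decide)
  have hvj : v j = C := by
    have := hj
    simp only [Function.comp_apply, gc, ← hO, ← hC] at this
    split_ifs at this with h1 h2
    · exact absurd this (by decide)
    · exact h2
    · exact absurd this (by decide)
  have h01 : (pathGraph m □ pathGraph n).dist (v 0) (v 1) = d := hAP 0 (by omega)
  have h12 : (pathGraph m □ pathGraph n).dist (v 1) (v 2) = d := hAP 1 (by omega)
  clear hAP hinj hsurj hi hj
  rw [grid_dist] at h01 h12
  simp only [ndist_def] at h01 h12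
  have hp0 : ((v 0).1 : ℕ) < m := (v 0).1.isLt
  have hq0 : ((v 0).2 : ℕ) < n := (v 0).2.isLt
  have hp1 : ((v 1).1 : ℕ) < m := (v 1).1.isLt
  have hq1 : ((v 1).2 : ℕ) < n := (v 1).2.isLt
  have hp2 : ((v 2).1 : ℕ) < m := (v 2).1.isLt
  have hq2 : ((v 2).2 : ℕ) < n := (v 2).2.isLt
  have hcases : ∀ k : Fin 3, k = 0 ∨ k = 1 ∨ k = 2 := by decide
  rcases hcases i with rfl | rfl | rfl <;> rcases hcases j with rfl | rfl | rfl
  · exact absurd (congrArg (fun z => (z.1 : ℕ)) (hvi.symm.trans hvj)) (by simp [hO, hC]; omega)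
  · have a1 : ((v 0).1 : ℕ) = 0 := by rw [hvi, hO]
    have a2 : ((v 0).2 : ℕ) = 0 := by rw [hvi, hO]
    have b1 : ((v 1).1 : ℕ) = m - 1 := by rw [hvj, hC]
    have b2 : ((v 1).2 : ℕ) = n - 1 := by rw [hvj, hC]
    have c1 : ((v 2).1 : ℕ) = 0 := by omega
    have c2 : ((v 2).2 : ℕ) = 0 := by omega
    have hdup : v 2 = v 0 := by
      rw [hvi, hO]
      exact Prod.ext_iff.mpr ⟨Fin.ext c1, Fin.ext c2⟩
    exact absurd (hv hdup) (by decide)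
  · have a1 : ((v 0).1 : ℕ) = 0 := by rw [hvi, hO]
    have a2 : ((v 0).2 : ℕ) = 0 := by rw [hvi, hO]
    have b1 : ((v 2).1 : ℕ) = m - 1 := by rw [hvj, hC]
    have b2 : ((v 2).2 : ℕ) = n - 1 := by rw [hvj, hC]
    omega
  · have a1 : ((v 1).1 : ℕ) = 0 := by rw [hvi, hO]
    have a2 : ((v 1).2 : ℕ) = 0 := by rw [hvi, hO]
    have b1 : ((v 0).1 : ℕ) = m - 1 := by rw [hvj, hC]
    have b2 : ((v 0).2 : ℕ) = n - 1 := by rw [hvj, hC]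
    have c1 : ((v 2).1 : ℕ) = m - 1 := by omega
    have c2 : ((v 2).2 : ℕ) = n - 1 := by omega
    have hdup : v 2 = v 0 := by
      rw [hvj, hC]
      exact Prod.ext_iff.mpr ⟨Fin.ext c1, Fin.ext c2⟩
    exact absurd (hv hdup) (by decide)
  · exact absurd (congrArg (fun z => (z.1 : ℕ)) (hvi.symm.trans hvj)) (by simp [hO, hC]; omega)
  · have a1 : ((v 1).1 : ℕ) = 0 := by rw [hvi, hO]
    have a2 : ((v 1).2 : ℕ) = 0 := by rw [hvi, hO]
    have b1 : ((v 2).1 : ℕ) = m - 1 := by rw [hvj, hC]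
    have b2 : ((v 2).2 : ℕ) = n - 1 := by rw [hvj, hC]
    have c1 : ((v 0).1 : ℕ) = m - 1 := by omega
    have c2 : ((v 0).2 : ℕ) = n - 1 := by omega
    have hdup : v 0 = v 2 := by
      rw [hvj, hC]
      exact Prod.ext_iff.mpr ⟨Fin.ext c1, Fin.ext c2⟩
    exact absurd (hv hdup) (by decide)
  · have a1 : ((v 2).1 : ℕ) = 0 := by rw [hvi, hO]
    have a2 : ((v 2).2 : ℕ) = 0 := by rw [hvi, hO]
    have b1 : ((v 0).1 : ℕ) = m - 1 := by rw [hvj, hC]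
    have b2 : ((v 0).2 : ℕ) = n - 1 := by rw [hvj, hC]
    omega
  · have a1 : ((v 2).1 : ℕ) = 0 := by rw [hvi, hO]
    have a2 : ((v 2).2 : ℕ) = 0 := by rw [hvi, hO]
    have b1 : ((v 1).1 : ℕ) = m - 1 := by rw [hvj, hC]
    have b2 : ((v 1).2 : ℕ) = n - 1 := by rw [hvj, hC]
    have c1 : ((v 0).1 : ℕ) = 0 := by omega
    have c2 : ((v 0).2 : ℕ) = 0 := by omega
    have hdup : v 0 = v 2 := by
      rw [hvi, hO]
      exact Prod.ext_iff.mpr ⟨Fin.ext c1, Fin.ext c2⟩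
    exact absurd (hv hdup) (by decide)
  · exact absurd (congrArg (fun z => (z.1 : ℕ)) (hvi.symm.trans hvj)) (by simp [hO, hC]; omega)

private lemma gc_surj (hm : 2 ≤ m) (hn : 2 ≤ n) : Function.Surjective (gc hm hn) := by
  intro y
  fin_cases y
  · refine ⟨(⟨1, by omega⟩, ⟨0, by omega⟩), ?_⟩
    simp only [gc, Prod.mk.injEq, Fin.mk.injEq]
    rw [if_neg (by simp), if_neg (by simp; omega)]
    rfl
  · exact ⟨(⟨0, by omega⟩, ⟨0, by omega⟩), by simp [gc]⟩
  · refine ⟨(⟨m - 1, by omega⟩, ⟨n - 1, by omega⟩), ?_⟩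
    simp only [gc, Prod.mk.injEq, Fin.mk.injEq]
    rw [if_neg (by simp; omega)]
    simp

end Main

section Thm

theorem aw_ge_four_of_odd (m n : ℕ) (hm : 2 ≤ m) (hn : 2 ≤ n) (hodd : Odd (m + n)) :
    4 ≤ aw (pathGraph m □ pathGraph n) 3 ∧
    ∃ c : Fin m × Fin n → Fin 3, Function.Surjective c ∧
      ¬ HasRainbowAP (pathGraph m □ pathGraph n) 3 c := by
  constructor
  · apply le_csInf
    · refine ⟨m * n + 1, Nat.succ_pos _, fun c hc => ?_⟩
      have := Fintype.card_le_of_surjective c hc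
      rw [Fintype.card_prod, Fintype.card_fin, Fintype.card_fin, Fintype.card_fin] at this
      omega
    · rintro r ⟨hrpos, hall⟩
      by_contra hlt
      push_neg at hlt
      interval_cases r
      · -- r = 1
        obtain ⟨v, _, hinj⟩ := hall (fun _ => 0)
          (fun y => ⟨(⟨0, by omega⟩, ⟨0, by omega⟩), Subsingleton.elim _ _⟩)
        have := Fintype.card_le_of_injective _ hinj
        simp at this
      · -- r = 2
        have hs : Function.Surjective
            (fun x : Fin m × Fin n =>
              if x = (⟨0, by omega⟩, ⟨0, by omega⟩) then (0 : Fin 2) else 1) := by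
          intro y
          fin_cases y
          · exact ⟨(⟨0, by omega⟩, ⟨0, by omega⟩), by simp⟩
          · exact ⟨(⟨1, by omega⟩, ⟨0, by omega⟩), by simp⟩
        obtain ⟨v, _, hinj⟩ := hall _ hs
        have := Fintype.card_le_of_injective _ hinj
        simp at this
      · -- r = 3
        exact gc_no_rainbow hm hn hodd (hall (gc hm hn) (gc_surj hm hn))
  · exact ⟨gc hm hn, gc_surj hm hn, gc_no_rainbow hm hn hodd⟩

end Thm
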